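/- Let (A,ψ) be an O-deformation of a and I_A = ker(m_A : A ⊗_k A → A). Let N := I_A/(T*·I_A + I_A·T*) be the reduction of I_A modulo T* on both sides (T* acting through the first tensor factor on the left and through the second tensor factor on the right); N is an a-bimodule. Then the following sequence of a-bimodules is exact: 0 → a ⊗ T* →^ν N →^u a ⊗_k a →^{m_a} a → 0, where: m_a is the multiplication map of a; u is induced by the inclusion I_A ⊆ A ⊗_k A followed by the two-sided reduction A ⊗_k A → a ⊗_k a; and ν sends y ⊗ t (y ∈ a, t ∈ T*) to the class in N of the element (t·x) ⊗ 1 − 1 ⊗ (x·t) ∈ I_A, where x ∈ A is any lift of y under ψ. -/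

import Mathlib

open scoped TensorProduct

noncomputable section

variable {k : Type*} [Field k] [CharZero k]
variable {A : Type*} [Ring A] [Algebra k A]
variable {T : Type*} [AddCommGroup T] [Module k T] [FiniteDimensional k T]

set_option maxHeartbeats 2000000

set_option linter.unusedSectionVars false in
set_option maxHeartbeats 1000000 in
/-- Key consequence of freeness: a `k`-linear retraction detecting the `T*`-multiples. -/
theorem exists_ell (B : Type*) [Ring B] [Algebra k B]
    [Algebra (TrivSqZeroExt k (Module.Dual k T)) B]
    [IsScalarTower k (TrivSqZeroExt k (Module.Dual k T)) B]
    [Module.Free (TrivSqZeroExt k (Module.Dual k T)) B]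
    (ψ : B →ₐ[k] A)
    (hψι : ∀ t : Module.Dual k T,
      ψ (algebraMap (TrivSqZeroExt k (Module.Dual k T)) B (TrivSqZeroExt.inr t)) = 0) :
    ∃ ℓ : B →ₗ[k] A ⊗[k] Module.Dual k T,
      ∀ (t : Module.Dual k T) (b : B),
        ℓ (algebraMap (TrivSqZeroExt k (Module.Dual k T)) B (TrivSqZeroExt.inr t) * b)
          = ψ b ⊗ₜ[k] t := by
  set O := TrivSqZeroExt k (Module.Dual k T) with hO
  have hsmul : ∀ (o : O) (x : B), algebraMap O B o * x = o • x := by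
    intro o x; rw [Algebra.smul_def]
  have hψsmul : ∀ (o : O) (x : B), ψ (o • x) = o.fst • ψ x := by
    intro o x
    rw [← hsmul, map_mul]
    have : ψ (algebraMap O B o) = algebraMap k A o.fst := by
      conv_lhs => rw [← TrivSqZeroExt.inl_fst_add_inr_snd_eq o]
      rw [map_add, map_add, hψι, add_zero]
      have h1 : (TrivSqZeroExt.inl o.fst : O) = algebraMap k O o.fst := by
        rw [TrivSqZeroExt.algebraMap_eq_inl]
      rw [h1, ← IsScalarTower.algebraMap_apply, AlgHom.commutes]
    rw [this, Algebra.smul_def]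
  let e := Module.Free.chooseBasis O B
  let F : Module.Free.ChooseBasisIndex O B → (O →ₗ[k] A ⊗[k] Module.Dual k T) :=
    fun s => (TensorProduct.mk k A (Module.Dual k T) (ψ (e s))) ∘ₗ
      (TrivSqZeroExt.sndHom k (Module.Dual k T))
  refine ⟨(Finsupp.lsum k F) ∘ₗ (e.repr.restrictScalars k).toLinearMap, ?_⟩
  intro t b
  have key : ∀ (m : Module.Dual k T) (s : Module.Free.ChooseBasisIndex O B),
      ((Finsupp.lsum k F) ∘ₗ (e.repr.restrictScalars k).toLinearMap)
        ((TrivSqZeroExt.inr m : O) • e s)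
        = ψ (e s) ⊗ₜ[k] m := by
    intro m s
    rw [LinearMap.comp_apply]
    have : (e.repr.restrictScalars k).toLinearMap ((TrivSqZeroExt.inr m : O) • e s)
        = Finsupp.single s (TrivSqZeroExt.inr m : O) := by
      simp only [LinearEquiv.coe_coe, LinearEquiv.restrictScalars_apply]
      rw [map_smul, e.repr_self, Finsupp.smul_single, smul_eq_mul, mul_one]
    rw [this, Finsupp.lsum_single]
    simp only [F, LinearMap.comp_apply, TrivSqZeroExt.sndHom_apply, TrivSqZeroExt.snd_inr]
    rfl
  have hspan : b ∈ Submodule.span k {x : B | ∃ (o : O) (s : Module.Free.ChooseBasisIndex O B),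
      x = o • e s} := by
    have hx := e.linearCombination_repr b
    rw [Submodule.mem_span]
    intro p hp
    rw [← hx, Finsupp.linearCombination_apply]
    refine Submodule.sum_mem _ (fun s _ => ?_)
    exact hp ⟨_, s, rfl⟩
  induction hspan using Submodule.span_induction with
  | mem y hy =>
      obtain ⟨o, s, rfl⟩ := hy
      have h1 : algebraMap O B (TrivSqZeroExt.inr t) * (o • e s)
          = (TrivSqZeroExt.inr (o.fst • t) : O) • e s := by
        rw [← hsmul o, ← mul_assoc, ← map_mul, hsmul]
        congr 2
        conv_lhs => rw [← TrivSqZeroExt.inl_fst_add_inr_snd_eq o]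
        rw [mul_add, TrivSqZeroExt.inr_mul_inl, TrivSqZeroExt.inr_mul_inr, add_zero,
          op_smul_eq_smul]
      rw [h1, key, hψsmul, TensorProduct.tmul_smul, TensorProduct.smul_tmul']
  | zero => simp
  | add y z _ _ hy hz =>
      rw [mul_add, map_add, map_add, TensorProduct.add_tmul, hy, hz]
  | smul c y _ hy =>
      rw [mul_smul_comm, map_smul, map_smul, hy, TensorProduct.smul_tmul']


/-- The fundamental four-term exact sequence `0 → a ⊗ T* → N → a ⊗ a → a → 0` attached to an
`O`-deformation `(B, ψ)` of `a` (with `O = k ⊕ T*` the square-zero extension).  Here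
`I := ker(m_B : B ⊗ B → B)`, `N := I/(T*·I + I·T*)` is the two-sided reduction of `I` modulo
`T*` (realized below via the submodule `K = K₁ ⊔ K₂ ≤ I`), `u : N → a ⊗ a` is induced by the
map `g₂ = ψ ⊗ ψ` restricted to `I`, and `ν : a ⊗ T* → N` sends `y ⊗ t` to the class of
`(t·x) ⊗ 1 − 1 ⊗ (x·t)` where `x = σ(y)` is any lift of `y` under `ψ`.  Exactness is
expressed without forming the quotient `N`:  `ν` is injective into `N` (its values lie in `K`
only for `w = 0`), the kernel of `u` equals the image of `ν`
(`I ∩ ker g₂ = K ⊔ range ν`), `ker(m_a) = g₂(I)` and `m_a` is onto. -/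
theorem deformation_four_term_exact_sequence
    (B : Type*) [Ring B] [Algebra k B]
    [Algebra (TrivSqZeroExt k (Module.Dual k T)) B]
    [IsScalarTower k (TrivSqZeroExt k (Module.Dual k T)) B]
    [Module.Free (TrivSqZeroExt k (Module.Dual k T)) B]
    (ψ : B →ₐ[k] A) (hsurj : Function.Surjective ψ)
    (hker : ∀ x : B, ψ x = 0 ↔ x ∈ Ideal.span (Set.range fun t : Module.Dual k T =>
      algebraMap (TrivSqZeroExt k (Module.Dual k T)) B (TrivSqZeroExt.inr t)))
    -- the image of `T* ⊆ O` in `B`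
    (ι : Module.Dual k T → B)
    (hι : ι = fun t => algebraMap (TrivSqZeroExt k (Module.Dual k T)) B (TrivSqZeroExt.inr t))
    -- the kernel of multiplication
    (I : Submodule k (B ⊗[k] B)) (hI : I = LinearMap.ker (LinearMap.mul' k B))
    -- `K = T*·I_A + I_A·T*`
    (K : Submodule k (B ⊗[k] B))
    (hK : K = Submodule.span k {y : B ⊗[k] B | ∃ t : Module.Dual k T, ∃ x ∈ I,
        y = LinearMap.rTensor B (LinearMap.mulLeft k (ι t)) x} ⊔
      Submodule.span k {y : B ⊗[k] B | ∃ t : Module.Dual k T, ∃ x ∈ I,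
        y = LinearMap.lTensor B (LinearMap.mulRight k (ι t)) x})
    -- the two-sided reduction `B ⊗ B → a ⊗ a`
    (g₂ : B ⊗[k] B →ₗ[k] A ⊗[k] A)
    (hg₂ : g₂ = TensorProduct.map ψ.toLinearMap ψ.toLinearMap)
    -- a `k`-linear section of `ψ`
    (σ : A →ₗ[k] B) (hσ : ∀ y : A, ψ (σ y) = y)
    -- the boundary map `ν : a ⊗ T* → I_A`, `y ⊗ t ↦ (t·σy) ⊗ 1 − 1 ⊗ (σy·t)`
    (ν : A ⊗[k] Module.Dual k T →ₗ[k] B ⊗[k] B)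
    (hν : ∀ (y : A) (t : Module.Dual k T),
      ν (y ⊗ₜ[k] t) = (ι t * σ y) ⊗ₜ[k] (1 : B) - (1 : B) ⊗ₜ[k] (σ y * ι t)) :
    -- the sequence `0 → a ⊗ T* → I/K → a ⊗ a → a → 0` makes sense and is exact:
    (K ≤ I) ∧
    (LinearMap.range ν ≤ I) ∧
    (∀ w : A ⊗[k] Module.Dual k T, ν w ∈ K → w = 0) ∧
    (I ⊓ LinearMap.ker g₂ = K ⊔ LinearMap.range ν) ∧
    (LinearMap.ker (LinearMap.mul' k A) = Submodule.map g₂ I) ∧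
    Function.Surjective (LinearMap.mul' k A) := by
  classical
  -- basic commutation facts
  have hcomm : ∀ (t : Module.Dual k T) (b : B), ι t * b = b * ι t := by
    intro t b; simp only [hι]; exact Algebra.commutes _ _
  have hψι : ∀ t, ψ (ι t) = 0 := by
    intro t
    exact (hker (ι t)).mpr (Ideal.subset_span ⟨t, by rw [hι]⟩)
  have hιι : ∀ t t', ι t * ι t' = 0 := by
    intro t t'; simp only [hι]
    rw [← map_mul, TrivSqZeroExt.inr_mul_inr, map_zero]
  -- the span description of the kernel of ψ
  set M := Submodule.span k {y : B | ∃ t b, y = ι t * b} with hM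
  have hMmul : ∀ (b : B), ∀ x ∈ M, b * x ∈ M := by
    intro b x hx
    induction hx using Submodule.span_induction with
    | mem y hy =>
        obtain ⟨t, c, rfl⟩ := hy
        have : b * (ι t * c) = ι t * (b * c) := by
          rw [← mul_assoc, ← hcomm, mul_assoc]
        rw [this]
        exact Submodule.subset_span ⟨t, b * c, rfl⟩
    | zero => rw [mul_zero]; exact M.zero_mem
    | add y z _ _ hy hz => rw [mul_add]; exact M.add_mem hy hz
    | smul c y _ hy => rw [mul_smul_comm]; exact M.smul_mem c hy
  have hkerM : ∀ x : B, ψ x = 0 ↔ x ∈ M := by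
    intro x
    constructor
    · intro hx
      have hx' := (hker x).mp hx
      clear hx
      induction hx' using Submodule.span_induction with
      | mem y hy =>
          obtain ⟨t, rfl⟩ := hy
          refine Submodule.subset_span ⟨t, 1, ?_⟩
          rw [mul_one, hι]
      | zero => exact M.zero_mem
      | add y z _ _ hy hz => exact M.add_mem hy hz
      | smul c y _ hy => rw [smul_eq_mul]; exact hMmul c y hy
    · intro hx
      induction hx using Submodule.span_induction with
      | mem y hy => obtain ⟨t, c, rfl⟩ := hy; rw [map_mul, hψι, zero_mul]
      | zero => exact map_zero ψ
      | add y z _ _ hy hz => rw [map_add, hy, hz, add_zero]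
      | smul c y _ hy => rw [map_smul, hy, smul_zero]
  have hι0 : ∀ (t : Module.Dual k T) (x : B), ψ x = 0 → ι t * x = 0 := by
    intro t x hx
    have hx' := (hkerM x).mp hx
    clear hx
    induction hx' using Submodule.span_induction with
    | mem y hy =>
        obtain ⟨t', c, rfl⟩ := hy
        rw [← mul_assoc, hιι, zero_mul]
    | zero => exact mul_zero _
    | add y z _ _ hy hz => rw [mul_add, hy, hz, add_zero]
    | smul c y _ hy => rw [mul_smul_comm, hy, smul_zero]
  have hImem : ∀ x : B ⊗[k] B, x ∈ I ↔ LinearMap.mul' k B x = 0 := by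
    intro x; rw [hI]; exact Iff.rfl
  -- multiplication versus one-sided multiplication on tensors
  have hmulr : ∀ (c : B) (x : B ⊗[k] B),
      LinearMap.mul' k B (LinearMap.rTensor B (LinearMap.mulLeft k c) x)
        = c * LinearMap.mul' k B x := by
    intro c x
    induction x using TensorProduct.induction_on with
    | zero => simp
    | tmul a b =>
        simp only [LinearMap.rTensor_tmul, LinearMap.mulLeft_apply, LinearMap.mul'_apply,
          mul_assoc]
    | add y z hy hz => rw [map_add, map_add, map_add, hy, hz, mul_add]
  have hmull : ∀ (c : B) (x : B ⊗[k] B),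
      LinearMap.mul' k B (LinearMap.lTensor B (LinearMap.mulRight k c) x)
        = LinearMap.mul' k B x * c := by
    intro c x
    induction x using TensorProduct.induction_on with
    | zero => simp
    | tmul a b =>
        simp only [LinearMap.lTensor_tmul, LinearMap.mulRight_apply, LinearMap.mul'_apply,
          mul_assoc]
    | add y z hy hz => rw [map_add, map_add, map_add, hy, hz, add_mul]
  -- Conjunct 1 : K ≤ I
  have hKI : K ≤ I := by
    rw [hK]
    refine sup_le (Submodule.span_le.mpr ?_) (Submodule.span_le.mpr ?_)
    · rintro y ⟨t, x, hxI, rfl⟩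
      show _ ∈ I
      rw [hImem, hmulr, (hImem x).mp hxI, mul_zero]
    · rintro y ⟨t, x, hxI, rfl⟩
      show _ ∈ I
      rw [hImem, hmull, (hImem x).mp hxI, zero_mul]
  -- Conjunct 2 : range ν ≤ I
  have hνI : LinearMap.range ν ≤ I := by
    have hcomp : (LinearMap.mul' k B) ∘ₗ ν = 0 := by
      apply TensorProduct.ext'
      intro y t
      rw [LinearMap.comp_apply, hν, map_sub, LinearMap.mul'_apply, LinearMap.mul'_apply,
        mul_one, one_mul, hcomm, sub_self, LinearMap.zero_apply]
    rintro _ ⟨w, rfl⟩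
    rw [hImem]
    exact DFunLike.congr_fun hcomp w
  -- the retraction ℓ from freeness
  obtain ⟨ℓ, hℓ'⟩ := exists_ell (A := A) B ψ (fun t => by
    rw [show algebraMap (TrivSqZeroExt k (Module.Dual k T)) B (TrivSqZeroExt.inr t) = ι t
      from by rw [hι]]
    exact hψι t)
  have hℓ : ∀ (t : Module.Dual k T) (b : B), ℓ (ι t * b) = ψ b ⊗ₜ[k] t := by
    intro t b; rw [hι]; exact hℓ' t b
  have hℓr : ∀ (t : Module.Dual k T) (b : B), ℓ (b * ι t) = ψ b ⊗ₜ[k] t := by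
    intro t b; rw [← hcomm]; exact hℓ t b
  -- the detecting map q
  have mulRight_add : ∀ a a' : A, LinearMap.mulRight k (a + a')
      = LinearMap.mulRight k a + LinearMap.mulRight k a' := by
    intro a a'; ext x; simp [mul_add]
  have mulRight_smul : ∀ (c : k) (a : A), LinearMap.mulRight k (c • a)
      = c • LinearMap.mulRight k a := by
    intro c a; ext x; simp [mul_smul_comm]
  have mulLeft_add : ∀ a a' : A, LinearMap.mulLeft k (a + a')
      = LinearMap.mulLeft k a + LinearMap.mulLeft k a' := by
    intro a a'; ext x; simp [add_mul]
  have mulLeft_smul : ∀ (c : k) (a : A), LinearMap.mulLeft k (c • a)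
      = c • LinearMap.mulLeft k a := by
    intro c a; ext x; simp [smul_mul_assoc]
  have mulLeft_zero : LinearMap.mulLeft k (0 : A) = 0 := by ext x; simp
  have mulRight_zero : LinearMap.mulRight k (0 : A) = 0 := by ext x; simp
  let ρ : A → (A ⊗[k] Module.Dual k T →ₗ[k] A ⊗[k] Module.Dual k T) :=
    fun a => LinearMap.rTensor (Module.Dual k T) (LinearMap.mulRight k a)
  let ρ' : A → (A ⊗[k] Module.Dual k T →ₗ[k] A ⊗[k] Module.Dual k T) :=
    fun a => LinearMap.rTensor (Module.Dual k T) (LinearMap.mulLeft k a)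
  let q : B ⊗[k] B →ₗ[k] A ⊗[k] Module.Dual k T := TensorProduct.lift
    (LinearMap.mk₂ k (fun b c => ρ (ψ c) (ℓ b) - ρ' (ψ b) (ℓ c))
      (by
        intro b b' c
        simp only [ρ, ρ', map_add, mulLeft_add, LinearMap.rTensor_add, LinearMap.add_apply]
        abel)
      (by
        intro cc b c
        simp only [ρ, ρ', map_smul, mulLeft_smul, LinearMap.rTensor_smul, LinearMap.smul_apply,
          smul_sub])
      (by
        intro b c c'
        simp only [ρ, ρ', map_add, mulRight_add, LinearMap.rTensor_add, LinearMap.add_apply]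
        abel)
      (by
        intro cc b c
        simp only [ρ, ρ', map_smul, mulRight_smul, LinearMap.rTensor_smul, LinearMap.smul_apply,
          smul_sub]))
  have hq : ∀ (b c : B), q (b ⊗ₜ[k] c) = ρ (ψ c) (ℓ b) - ρ' (ψ b) (ℓ c) := by
    intro b c; rfl
  -- q vanishes on K
  have hqK : K ≤ LinearMap.ker q := by
    rw [hK]
    refine sup_le (Submodule.span_le.mpr ?_) (Submodule.span_le.mpr ?_)
    · rintro y ⟨t, x, hxI, rfl⟩
      have hqr : ∀ z : B ⊗[k] B, q (LinearMap.rTensor B (LinearMap.mulLeft k (ι t)) z)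
          = ψ (LinearMap.mul' k B z) ⊗ₜ[k] t := by
        intro z
        induction z using TensorProduct.induction_on with
        | zero => simp
        | tmul b c =>
            rw [LinearMap.rTensor_tmul, LinearMap.mulLeft_apply, hq, hℓ]
            have h0 : ψ (ι t * b) = 0 := by rw [map_mul, hψι, zero_mul]
            rw [h0]
            simp only [ρ, ρ', mulLeft_zero, LinearMap.rTensor_zero, LinearMap.zero_apply,
              sub_zero, LinearMap.rTensor_tmul, LinearMap.mulRight_apply, LinearMap.mul'_apply,
              map_mul]
        | add y z hy hz => simp only [map_add, hy, hz, TensorProduct.add_tmul]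
      show _ ∈ LinearMap.ker q
      rw [LinearMap.mem_ker, hqr, (hImem x).mp hxI, map_zero, TensorProduct.zero_tmul]
    · rintro y ⟨t, x, hxI, rfl⟩
      have hql : ∀ z : B ⊗[k] B, q (LinearMap.lTensor B (LinearMap.mulRight k (ι t)) z)
          = - (ψ (LinearMap.mul' k B z) ⊗ₜ[k] t) := by
        intro z
        induction z using TensorProduct.induction_on with
        | zero => simp
        | tmul b c =>
            rw [LinearMap.lTensor_tmul, LinearMap.mulRight_apply, hq, hℓr]
            have h0 : ψ (c * ι t) = 0 := by rw [map_mul, hψι, mul_zero]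
            rw [h0]
            simp only [ρ, ρ', mulRight_zero, LinearMap.rTensor_zero, LinearMap.zero_apply,
              zero_sub, LinearMap.rTensor_tmul, LinearMap.mulLeft_apply, LinearMap.mul'_apply,
              map_mul, neg_inj]
        | add y z hy hz =>
            simp only [map_add, hy, hz, TensorProduct.add_tmul]
            abel
      show _ ∈ LinearMap.ker q
      rw [LinearMap.mem_ker, hql, (hImem x).mp hxI, map_zero, TensorProduct.zero_tmul]
      abel
  -- q ∘ ν = 2 • id
  have hqν : ∀ w : A ⊗[k] Module.Dual k T, q (ν w) = (2 : k) • w := by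
    have hcomp : q ∘ₗ ν = (2 : k) • LinearMap.id := by
      apply TensorProduct.ext'
      intro y t
      rw [LinearMap.comp_apply, hν, map_sub, hq, hq, hℓ, hℓr, hσ]
      have h1 : ψ (ι t * σ y) = 0 := by rw [map_mul, hψι, zero_mul]
      have h2 : ψ (σ y * ι t) = 0 := by rw [map_mul, hψι, mul_zero]
      rw [h1, h2, map_one]
      simp only [ρ, ρ', mulLeft_zero, mulRight_zero, LinearMap.rTensor_zero,
        LinearMap.mulLeft_one, LinearMap.mulRight_one, LinearMap.rTensor_id,
        LinearMap.zero_apply, LinearMap.id_coe, id_eq, LinearMap.smul_apply,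
        LinearMap.id_apply]
      rw [two_smul]
      abel
    intro w
    have := DFunLike.congr_fun hcomp w
    simpa using this
  -- Conjunct 3
  have hconj3 : ∀ w : A ⊗[k] Module.Dual k T, ν w ∈ K → w = 0 := by
    intro w hw
    have h0 : q (ν w) = 0 := hqK hw
    rw [hqν] at h0
    have h2 : (2 : k) ≠ 0 := two_ne_zero
    exact (smul_eq_zero.mp h0).resolve_left h2
  -- auxiliary reductions modulo K
  have R2gen : ∀ b : B, ∀ y ∈ M, ∃ j : B, ψ j = 0 ∧ y ⊗ₜ[k] b - j ⊗ₜ[k] (1 : B) ∈ K := by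
    intro b y hy
    induction hy using Submodule.span_induction with
    | mem y hy =>
        obtain ⟨t, x₀, rfl⟩ := hy
        refine ⟨ι t * (x₀ * b), by rw [map_mul, hψι, zero_mul], ?_⟩
        have hIel : x₀ ⊗ₜ[k] b - (x₀ * b) ⊗ₜ[k] (1 : B) ∈ I := by
          rw [hImem, map_sub, LinearMap.mul'_apply, LinearMap.mul'_apply, mul_one, sub_self]
        have heq : LinearMap.rTensor B (LinearMap.mulLeft k (ι t))
            (x₀ ⊗ₜ[k] b - (x₀ * b) ⊗ₜ[k] (1 : B))
            = (ι t * x₀) ⊗ₜ[k] b - (ι t * (x₀ * b)) ⊗ₜ[k] (1 : B) := by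
          rw [map_sub, LinearMap.rTensor_tmul, LinearMap.rTensor_tmul,
            LinearMap.mulLeft_apply, LinearMap.mulLeft_apply]
        rw [hK]
        exact Submodule.mem_sup_left (Submodule.subset_span ⟨t, _, hIel, heq.symm⟩)
    | zero =>
        exact ⟨0, map_zero ψ,
          by rw [TensorProduct.zero_tmul, TensorProduct.zero_tmul, sub_zero]; exact K.zero_mem⟩
    | add y z _ _ hy hz =>
        obtain ⟨j, hj, hjK⟩ := hy
        obtain ⟨j', hj', hj'K⟩ := hz
        refine ⟨j + j', by rw [map_add, hj, hj', add_zero], ?_⟩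
        have h3 : (y + z) ⊗ₜ[k] b - (j + j') ⊗ₜ[k] (1 : B)
            = (y ⊗ₜ[k] b - j ⊗ₜ[k] (1 : B)) + (z ⊗ₜ[k] b - j' ⊗ₜ[k] (1 : B)) := by
          rw [TensorProduct.add_tmul, TensorProduct.add_tmul]; abel
        rw [h3]; exact K.add_mem hjK hj'K
    | smul c y _ hy =>
        obtain ⟨j, hj, hjK⟩ := hy
        refine ⟨c • j, by rw [map_smul, hj, smul_zero], ?_⟩
        have h3 : (c • y) ⊗ₜ[k] b - (c • j) ⊗ₜ[k] (1 : B)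
            = c • (y ⊗ₜ[k] b - j ⊗ₜ[k] (1 : B)) := by
          rw [smul_sub, TensorProduct.smul_tmul', TensorProduct.smul_tmul']
        rw [h3]; exact K.smul_mem c hjK
  have R1gen : ∀ b : B, ∀ y ∈ M, ∃ j : B, ψ j = 0 ∧ b ⊗ₜ[k] y - (1 : B) ⊗ₜ[k] j ∈ K := by
    intro b y hy
    induction hy using Submodule.span_induction with
    | mem y hy =>
        obtain ⟨t, x₀, rfl⟩ := hy
        refine ⟨b * x₀ * ι t, by rw [map_mul, hψι, mul_zero], ?_⟩
        have hIel : b ⊗ₜ[k] x₀ - (1 : B) ⊗ₜ[k] (b * x₀) ∈ I := by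
          rw [hImem, map_sub, LinearMap.mul'_apply, LinearMap.mul'_apply, one_mul, sub_self]
        have heq : LinearMap.lTensor B (LinearMap.mulRight k (ι t))
            (b ⊗ₜ[k] x₀ - (1 : B) ⊗ₜ[k] (b * x₀))
            = b ⊗ₜ[k] (x₀ * ι t) - (1 : B) ⊗ₜ[k] (b * x₀ * ι t) := by
          rw [map_sub, LinearMap.lTensor_tmul, LinearMap.lTensor_tmul,
            LinearMap.mulRight_apply, LinearMap.mulRight_apply]
        rw [hcomm, hK]
        exact Submodule.mem_sup_right (Submodule.subset_span ⟨t, _, hIel, heq.symm⟩)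
    | zero =>
        exact ⟨0, map_zero ψ,
          by rw [TensorProduct.tmul_zero, TensorProduct.tmul_zero, sub_zero]; exact K.zero_mem⟩
    | add y z _ _ hy hz =>
        obtain ⟨j, hj, hjK⟩ := hy
        obtain ⟨j', hj', hj'K⟩ := hz
        refine ⟨j + j', by rw [map_add, hj, hj', add_zero], ?_⟩
        have h3 : b ⊗ₜ[k] (y + z) - (1 : B) ⊗ₜ[k] (j + j')
            = (b ⊗ₜ[k] y - (1 : B) ⊗ₜ[k] j) + (b ⊗ₜ[k] z - (1 : B) ⊗ₜ[k] j') := by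
          rw [TensorProduct.tmul_add, TensorProduct.tmul_add]; abel
        rw [h3]; exact K.add_mem hjK hj'K
    | smul c y _ hy =>
        obtain ⟨j, hj, hjK⟩ := hy
        refine ⟨c • j, by rw [map_smul, hj, smul_zero], ?_⟩
        have h3 : b ⊗ₜ[k] (c • y) - (1 : B) ⊗ₜ[k] (c • j)
            = c • (b ⊗ₜ[k] y - (1 : B) ⊗ₜ[k] j) := by
          rw [smul_sub, TensorProduct.tmul_smul, TensorProduct.tmul_smul]
        rw [h3]; exact K.smul_mem c hjK
  have R2 : ∀ u : (LinearMap.ker ψ.toLinearMap) ⊗[k] B, ∃ j : B, ψ j = 0 ∧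
      LinearMap.rTensor B (LinearMap.ker ψ.toLinearMap).subtype u - j ⊗ₜ[k] (1 : B) ∈ K := by
    intro u
    induction u using TensorProduct.induction_on with
    | zero =>
        exact ⟨0, map_zero ψ, by rw [map_zero, TensorProduct.zero_tmul, sub_zero]; exact K.zero_mem⟩
    | tmul jj b =>
        rw [LinearMap.rTensor_tmul, Submodule.subtype_apply]
        exact R2gen b (jj : B) ((hkerM _).mp (LinearMap.mem_ker.mp jj.2))
    | add u u' hu hu' =>
        obtain ⟨j, hj, hjK⟩ := hu
        obtain ⟨j', hj', hj'K⟩ := hu'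
        refine ⟨j + j', by rw [map_add, hj, hj', add_zero], ?_⟩
        have h3 : LinearMap.rTensor B (LinearMap.ker ψ.toLinearMap).subtype (u + u')
            - (j + j') ⊗ₜ[k] (1 : B)
            = (LinearMap.rTensor B (LinearMap.ker ψ.toLinearMap).subtype u - j ⊗ₜ[k] (1 : B))
            + (LinearMap.rTensor B (LinearMap.ker ψ.toLinearMap).subtype u' - j' ⊗ₜ[k] (1 : B)) := by
          rw [map_add, TensorProduct.add_tmul]; abel
        rw [h3]; exact K.add_mem hjK hj'K
  have R1 : ∀ u : B ⊗[k] (LinearMap.ker ψ.toLinearMap), ∃ j : B, ψ j = 0 ∧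
      LinearMap.lTensor B (LinearMap.ker ψ.toLinearMap).subtype u - (1 : B) ⊗ₜ[k] j ∈ K := by
    intro u
    induction u using TensorProduct.induction_on with
    | zero =>
        exact ⟨0, map_zero ψ, by rw [map_zero, TensorProduct.tmul_zero, sub_zero]; exact K.zero_mem⟩
    | tmul b jj =>
        rw [LinearMap.lTensor_tmul, Submodule.subtype_apply]
        exact R1gen b (jj : B) ((hkerM _).mp (LinearMap.mem_ker.mp jj.2))
    | add u u' hu hu' =>
        obtain ⟨j, hj, hjK⟩ := hu
        obtain ⟨j', hj', hj'K⟩ := hu'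
        refine ⟨j + j', by rw [map_add, hj, hj', add_zero], ?_⟩
        have h3 : LinearMap.lTensor B (LinearMap.ker ψ.toLinearMap).subtype (u + u')
            - (1 : B) ⊗ₜ[k] (j + j')
            = (LinearMap.lTensor B (LinearMap.ker ψ.toLinearMap).subtype u - (1 : B) ⊗ₜ[k] j)
            + (LinearMap.lTensor B (LinearMap.ker ψ.toLinearMap).subtype u' - (1 : B) ⊗ₜ[k] j') := by
          rw [map_add, TensorProduct.tmul_add]; abel
        rw [h3]; exact K.add_mem hjK hj'K
  -- the image of ν contains the commutator elements
  have R3 : ∀ j : B, ψ j = 0 → j ⊗ₜ[k] (1 : B) - (1 : B) ⊗ₜ[k] j ∈ LinearMap.range ν := by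
    intro j hj
    have hjM : j ∈ M := (hkerM j).mp hj
    clear hj
    induction hjM using Submodule.span_induction with
    | mem y hy =>
        obtain ⟨t, x, rfl⟩ := hy
        refine ⟨ψ x ⊗ₜ[k] t, ?_⟩
        rw [hν]
        have h1 : ι t * σ (ψ x) = ι t * x := by
          have h0 : ι t * (σ (ψ x) - x) = 0 := by
            refine hι0 t _ ?_
            rw [map_sub, hσ, sub_self]
          rw [mul_sub, sub_eq_zero] at h0
          exact h0
        rw [h1, ← hcomm, h1]
    | zero =>
        rw [TensorProduct.zero_tmul, TensorProduct.tmul_zero, sub_zero]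
        exact Submodule.zero_mem _
    | add y z _ _ hy hz =>
        have h3 : (y + z) ⊗ₜ[k] (1 : B) - (1 : B) ⊗ₜ[k] (y + z)
            = (y ⊗ₜ[k] (1 : B) - (1 : B) ⊗ₜ[k] y) + (z ⊗ₜ[k] (1 : B) - (1 : B) ⊗ₜ[k] z) := by
          rw [TensorProduct.add_tmul, TensorProduct.tmul_add]; abel
        rw [h3]; exact Submodule.add_mem _ hy hz
    | smul c y _ hy =>
        have h3 : (c • y) ⊗ₜ[k] (1 : B) - (1 : B) ⊗ₜ[k] (c • y)
            = c • (y ⊗ₜ[k] (1 : B) - (1 : B) ⊗ₜ[k] y) := by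
          rw [smul_sub, TensorProduct.smul_tmul', TensorProduct.tmul_smul]
        rw [h3]; exact Submodule.smul_mem _ c hy
  -- Conjunct 4
  have hconj4 : I ⊓ LinearMap.ker g₂ = K ⊔ LinearMap.range ν := by
    apply le_antisymm
    · intro w hw
      rw [Submodule.mem_inf] at hw
      obtain ⟨hwI, hwg⟩ := hw
      have hψsurj : Function.Surjective ψ.toLinearMap := hsurj
      have hwk : w ∈ LinearMap.ker (TensorProduct.map ψ.toLinearMap ψ.toLinearMap) := by
        rw [LinearMap.mem_ker, ← hg₂]; exact hwg
      rw [TensorProduct.map_ker (LinearMap.exact_subtype_ker_map ψ.toLinearMap) hψsurj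
        (LinearMap.exact_subtype_ker_map ψ.toLinearMap) hψsurj] at hwk
      obtain ⟨w₁, hw₁, w₂, hw₂, hsum⟩ := Submodule.mem_sup.mp hwk
      obtain ⟨u₁, rfl⟩ := hw₁
      obtain ⟨u₂, rfl⟩ := hw₂
      obtain ⟨j₁, hj₁0, hj₁K⟩ := R1 u₁
      obtain ⟨j₂, hj₂0, hj₂K⟩ := R2 u₂
      have hdK : w - (j₂ ⊗ₜ[k] (1 : B) + (1 : B) ⊗ₜ[k] j₁) ∈ K := by
        have heq : w - (j₂ ⊗ₜ[k] (1 : B) + (1 : B) ⊗ₜ[k] j₁)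
            = (LinearMap.rTensor B (LinearMap.ker ψ.toLinearMap).subtype u₂ - j₂ ⊗ₜ[k] (1 : B))
            + (LinearMap.lTensor B (LinearMap.ker ψ.toLinearMap).subtype u₁
              - (1 : B) ⊗ₜ[k] j₁) := by
          rw [← hsum]; abel
        rw [heq]; exact K.add_mem hj₂K hj₁K
      have hmul0 : j₂ + j₁ = 0 := by
        have h1 := (hImem _).mp (hKI hdK)
        rw [map_sub, map_add, LinearMap.mul'_apply, LinearMap.mul'_apply, mul_one, one_mul,
          (hImem w).mp hwI, zero_sub, neg_eq_zero] at h1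
        exact h1
      have hj₁ : j₁ = -j₂ := by
        rw [← neg_eq_of_add_eq_zero_right hmul0]
      have hR3 := R3 j₂ hj₂0
      have hw' : w = (w - (j₂ ⊗ₜ[k] (1 : B) + (1 : B) ⊗ₜ[k] j₁))
          + (j₂ ⊗ₜ[k] (1 : B) - (1 : B) ⊗ₜ[k] j₂) := by
        rw [hj₁, TensorProduct.tmul_neg]; abel
      rw [hw']
      exact Submodule.add_mem _ (Submodule.mem_sup_left hdK) (Submodule.mem_sup_right hR3)
    · refine sup_le (le_inf hKI ?_) (le_inf hνI ?_)
      · rw [hK, hg₂]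
        have hg₂r : ∀ (t : Module.Dual k T) (x : B ⊗[k] B),
            TensorProduct.map ψ.toLinearMap ψ.toLinearMap
              (LinearMap.rTensor B (LinearMap.mulLeft k (ι t)) x) = 0 := by
          intro t x
          induction x using TensorProduct.induction_on with
          | zero => simp
          | tmul b c =>
              rw [LinearMap.rTensor_tmul, LinearMap.mulLeft_apply, TensorProduct.map_tmul]
              have h0 : ψ.toLinearMap (ι t * b) = 0 := by
                show ψ (ι t * b) = 0
                rw [map_mul, hψι, zero_mul]
              rw [h0, TensorProduct.zero_tmul]
          | add y z hy hz => rw [map_add, map_add, hy, hz, add_zero]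
        have hg₂l : ∀ (t : Module.Dual k T) (x : B ⊗[k] B),
            TensorProduct.map ψ.toLinearMap ψ.toLinearMap
              (LinearMap.lTensor B (LinearMap.mulRight k (ι t)) x) = 0 := by
          intro t x
          induction x using TensorProduct.induction_on with
          | zero => simp
          | tmul b c =>
              rw [LinearMap.lTensor_tmul, LinearMap.mulRight_apply, TensorProduct.map_tmul]
              have h0 : ψ.toLinearMap (c * ι t) = 0 := by
                show ψ (c * ι t) = 0
                rw [map_mul, hψι, mul_zero]
              rw [h0, TensorProduct.tmul_zero]
          | add y z hy hz => rw [map_add, map_add, hy, hz, add_zero]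
        refine sup_le (Submodule.span_le.mpr ?_) (Submodule.span_le.mpr ?_)
        · rintro y ⟨t, x, hxI, rfl⟩
          show _ ∈ LinearMap.ker _
          rw [LinearMap.mem_ker]
          exact hg₂r t x
        · rintro y ⟨t, x, hxI, rfl⟩
          show _ ∈ LinearMap.ker _
          rw [LinearMap.mem_ker]
          exact hg₂l t x
      · rintro _ ⟨w, rfl⟩
        rw [LinearMap.mem_ker]
        have hcompνg : g₂ ∘ₗ ν = 0 := by
          rw [hg₂]
          apply TensorProduct.ext'
          intro y t
          rw [LinearMap.comp_apply, hν, map_sub, TensorProduct.map_tmul, TensorProduct.map_tmul]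
          have h1 : ψ.toLinearMap (ι t * σ y) = 0 := by
            show ψ (ι t * σ y) = 0
            rw [map_mul, hψι, zero_mul]
          have h2 : ψ.toLinearMap (σ y * ι t) = 0 := by
            show ψ (σ y * ι t) = 0
            rw [map_mul, hψι, mul_zero]
          rw [h1, h2, TensorProduct.zero_tmul, TensorProduct.tmul_zero, sub_zero,
            LinearMap.zero_apply]
        exact DFunLike.congr_fun hcompνg w
  -- Conjunct 5
  have hmulmap : ∀ x : B ⊗[k] B,
      LinearMap.mul' k A (TensorProduct.map ψ.toLinearMap ψ.toLinearMap x)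
        = ψ (LinearMap.mul' k B x) := by
    intro x
    induction x using TensorProduct.induction_on with
    | zero => simp
    | tmul b c =>
        rw [TensorProduct.map_tmul, LinearMap.mul'_apply, LinearMap.mul'_apply]
        exact (map_mul ψ b c).symm
    | add y z hy hz => rw [map_add, map_add, map_add, hy, hz, map_add]
  have hconj5 : LinearMap.ker (LinearMap.mul' k A) = Submodule.map g₂ I := by
    apply le_antisymm
    · intro z hz
      rw [LinearMap.mem_ker] at hz
      set w₀ := TensorProduct.map σ σ z with hw₀
      have hgw₀ : g₂ w₀ = z := by
        rw [hg₂, hw₀, ← LinearMap.comp_apply, ← TensorProduct.map_comp]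
        have hid : ψ.toLinearMap ∘ₗ σ = LinearMap.id := by
          ext y; exact hσ y
        rw [hid, TensorProduct.map_id, LinearMap.id_apply]
      set b := LinearMap.mul' k B w₀ with hb
      have hψb : ψ b = 0 := by
        rw [hb, ← hmulmap, ← hg₂, hgw₀, hz]
      refine ⟨w₀ - (1 : B) ⊗ₜ[k] b, ?_, ?_⟩
      · show _ ∈ I
        rw [hImem, map_sub, LinearMap.mul'_apply, one_mul, ← hb, sub_self]
      · rw [map_sub, hgw₀, hg₂, TensorProduct.map_tmul]
        have h1 : ψ.toLinearMap b = 0 := hψb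
        rw [h1, TensorProduct.tmul_zero, sub_zero]
    · rintro _ ⟨x, hxI, rfl⟩
      rw [LinearMap.mem_ker, hg₂, hmulmap, (hImem x).mp hxI, map_zero]
  have hconj6 : Function.Surjective (LinearMap.mul' k A) := by
    intro a
    exact ⟨a ⊗ₜ[k] (1 : A), by rw [LinearMap.mul'_apply, mul_one]⟩
  exact ⟨hKI, hνI, hconj3, hconj4, hconj5, hconj6⟩
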